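/- Let λ > 0 satisfy λ⁴ = λ² + 1 and set a = 1/(λ−1). There exists ε > 0 such that for all b, b′ ∈ (−ε, ε), the bimodal maps q_{λ,b} and q_{λ,b′} are topologically conjugate: there exists a homeomorphism h : [−a,a] → [−a,a] with h ∘ q_{λ,b} = q_{λ,b′} ∘ h. In particular, rigidity fails in the family of piecewise-linear bimodal maps of constant slope ±λ: an open set of parameters yields pairwise topologically conjugate maps of equal topological entropy. -/

import Mathlib

/-- The bimodal piecewise-linear map `q_{λ,b}` of constant slope `±λ`:
`q(x) = λx+1` for `x ≤ c¹`, `q(x) = −λx+b` for `c¹ ≤ x ≤ c²`, `q(x) = λx−1` for `x ≥ c²`,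
where `c¹ = (b−1)/(2λ)` and `c² = (b+1)/(2λ)` (the formulas agree at `c¹` and `c²`). -/
noncomputable def qmap (lam b : ℝ) (x : ℝ) : ℝ :=
  if x ≤ (b - 1) / (2 * lam) then lam * x + 1
  else if x ≤ (b + 1) / (2 * lam) then -lam * x + b
  else lam * x - 1

set_option maxHeartbeats 1000000
open scoped BoundedContinuousFunction

noncomputable section

/-- clamp of `x` to `[u,v]` -/
def clmp (u v x : ℝ) : ℝ := min (max x u) v

lemma clmp_mono (u v : ℝ) : Monotone (clmp u v) :=
  fun _ _ h => min_le_min (max_le_max h le_rfl) le_rfl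

lemma clmp_cont (u v : ℝ) : Continuous (clmp u v) :=
  ((continuous_id.max continuous_const).min continuous_const)

lemma clmp_mem (u v x : ℝ) (h : u ≤ v) : u ≤ clmp u v x ∧ clmp u v x ≤ v :=
  ⟨le_min (le_max_right _ _) h, min_le_right _ _⟩

lemma clmp_of_le (u v x : ℝ) (hx : x ≤ u) (h : u ≤ v) : clmp u v x = u := by
  unfold clmp; rw [max_eq_right hx, min_eq_left h]

lemma clmp_of_ge (u v x : ℝ) (hx : v ≤ x) (h : u ≤ v) : clmp u v x = v := by
  unfold clmp; rw [max_eq_left (h.trans hx), min_eq_right hx]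

lemma clmp_id (u v x : ℝ) (h1 : u ≤ x) (h2 : x ≤ v) : clmp u v x = x := by
  unfold clmp; rw [max_eq_left h1, min_eq_left h2]

/-- monotone PL interpolation through points `(t i, s i)`, `i = 0..n`. -/
def interp (n : ℕ) (t s : ℕ → ℝ) (x : ℝ) : ℝ :=
  s 0 + ∑ i ∈ Finset.range n,
    (s (i+1) - s i) / (t (i+1) - t i) * (clmp (t i) (t (i+1)) x - t i)

end

lemma chain_mono {n : ℕ} {t : ℕ → ℝ} (ht : ∀ i < n, t i < t (i+1)) :
    ∀ i j, i ≤ j → j ≤ n → t i ≤ t j := by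
  intro i j hij hjn
  induction j with
  | zero => simp_all
  | succ m ih =>
    rcases Nat.lt_or_ge i (m+1) with h | h
    · exact (ih (by omega) (by omega)).trans (ht m (by omega)).le
    · have : i = m + 1 := by omega
      simp [this]

lemma chain_mono_lt {n : ℕ} {t : ℕ → ℝ} (ht : ∀ i < n, t i < t (i+1)) :
    ∀ i j, i < j → j ≤ n → t i < t j := by
  intro i j hij hjn
  have h1 : t i ≤ t (j-1) := chain_mono ht i (j-1) (by omega) (by omega)
  have h2 : t (j-1) < t j := by
    have := ht (j-1) (by omega)
    have hj : j - 1 + 1 = j := by omega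
    rwa [hj] at this
  linarith

section
variable {n : ℕ} {t s : ℕ → ℝ}

lemma interp_mono (ht : ∀ i < n, t i < t (i+1)) (hs : ∀ i < n, s i < s (i+1)) :
    Monotone (interp n t s) := by
  intro x y hxy
  unfold interp
  gcongr with i hi
  · exact (div_pos (sub_pos.2 (hs i (Finset.mem_range.1 hi)))
      (sub_pos.2 (ht i (Finset.mem_range.1 hi)))).le
  · exact clmp_mono _ _ hxy

lemma interp_cont : Continuous (interp n t s) := by
  unfold interp
  exact continuous_const.add (continuous_finset_sum _ fun i _ =>
    (continuous_const.mul ((clmp_cont _ _).sub continuous_const)))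

lemma interp_value (ht : ∀ i < n, t i < t (i+1)) {j : ℕ} (hj : j ≤ n) :
    interp n t s (t j) = s j := by
  have tmono := chain_mono ht
  have key : ∀ i ∈ Finset.range n,
      (s (i+1) - s i) / (t (i+1) - t i) * (clmp (t i) (t (i+1)) (t j) - t i)
      = if i < j then s (i+1) - s i else 0 := by
    intro i hi
    have hi' := Finset.mem_range.1 hi
    by_cases hij : i < j
    · rw [if_pos hij]
      rw [clmp_of_ge _ _ _ (tmono (i+1) j hij hj) (ht i hi').le]
      exact div_mul_cancel₀ _ (sub_ne_zero.2 (ht i hi').ne')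
    · rw [if_neg hij]
      rw [clmp_of_le _ _ _ (tmono j i (by omega) (by omega)) (ht i hi').le]
      simp
  have hfil : (Finset.range n).filter (· < j) = Finset.range j := by
    ext i; simp only [Finset.mem_filter, Finset.mem_range]; omega
  rw [interp, Finset.sum_congr rfl key, ← Finset.sum_filter, hfil,
    Finset.sum_range_sub (fun i => s i)]
  ring

lemma interp_bounds (ht : ∀ i < n, t i < t (i+1)) (hs' : ∀ i < n, s i ≤ s (i+1)) (x : ℝ) :
    s 0 ≤ interp n t s x ∧ interp n t s x ≤ s n := by
  have hterm : ∀ i ∈ Finset.range n,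
      0 ≤ (s (i+1) - s i) / (t (i+1) - t i) * (clmp (t i) (t (i+1)) x - t i) ∧
      (s (i+1) - s i) / (t (i+1) - t i) * (clmp (t i) (t (i+1)) x - t i) ≤ s (i+1) - s i := by
    intro i hi
    have hi' := Finset.mem_range.1 hi
    have hΔ : (0:ℝ) < t (i+1) - t i := sub_pos.2 (ht i hi')
    have hsl : 0 ≤ (s (i+1) - s i) / (t (i+1) - t i) :=
      div_nonneg (sub_nonneg.2 (hs' i hi')) hΔ.le
    have hc := clmp_mem (t i) (t (i+1)) x (ht i hi').le
    constructor
    · exact mul_nonneg hsl (sub_nonneg.2 hc.1)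
    · calc (s (i+1) - s i) / (t (i+1) - t i) * (clmp (t i) (t (i+1)) x - t i)
          ≤ (s (i+1) - s i) / (t (i+1) - t i) * (t (i+1) - t i) := by
            apply mul_le_mul_of_nonneg_left _ hsl; linarith [hc.2]
        _ = s (i+1) - s i := div_mul_cancel₀ _ (sub_ne_zero.2 (ht i hi').ne')
  constructor
  · have : (0:ℝ) ≤ ∑ i ∈ Finset.range n,
        (s (i+1) - s i) / (t (i+1) - t i) * (clmp (t i) (t (i+1)) x - t i) :=
      Finset.sum_nonneg fun i hi => (hterm i hi).1
    unfold interp; linarith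
  · have : (∑ i ∈ Finset.range n,
        (s (i+1) - s i) / (t (i+1) - t i) * (clmp (t i) (t (i+1)) x - t i)) ≤
        ∑ i ∈ Finset.range n, (s (i+1) - s i) :=
      Finset.sum_le_sum fun i hi => (hterm i hi).2
    rw [Finset.sum_range_sub (fun i => s i)] at this
    unfold interp; linarith

end

noncomputable section
def qA (l : ℝ) : ℝ := 1/(l-1)
def qC1 (l b : ℝ) : ℝ := (b-1)/(2*l)
def qC2 (l b : ℝ) : ℝ := (b+1)/(2*l)
def qX1 (b : ℝ) : ℝ := (1+b)/2
def qX2 (l b : ℝ) : ℝ := l * qX1 b - 1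
def qX3 (l b : ℝ) : ℝ := -(l * qX2 l b) + b
def qX4 (l b : ℝ) : ℝ := l * qX3 l b - 1
def qX5 (l b : ℝ) : ℝ := l * qX4 l b + 1
def qY1 (b : ℝ) : ℝ := (b-1)/2
def qY2 (l b : ℝ) : ℝ := l * qY1 b + 1
def qY3 (l b : ℝ) : ℝ := -(l * qY2 l b) + b
def qY4 (l b : ℝ) : ℝ := l * qY3 l b + 1
def qY5 (l b : ℝ) : ℝ := l * qY4 l b - 1

def qpt (l b : ℝ) : ℕ → ℝ
  | 0 => -qA l
  | 1 => qY1 b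
  | 2 => qY5 l b
  | 3 => qY3 l b
  | 4 => qX4 l b
  | 5 => qC1 l b
  | 6 => qX2 l b
  | 7 => qY2 l b
  | 8 => qC2 l b
  | 9 => qY4 l b
  | 10 => qX3 l b
  | 11 => qX5 l b
  | 12 => qX1 b
  | _ => qA l

/-- the contraction operator formula -/
def Tform (l b b' : ℝ) (f : ℝ → ℝ) (x : ℝ) : ℝ :=
  if x ≤ qC1 l b then (f (l*x+1) - 1)/l
  else if x ≤ qC2 l b then (b' - f (-(l*x)+b))/l
  else (f (l*x-1)+1)/l

/-- membership conditions for the conjugating maps -/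
def Scond (l b b' : ℝ) (f : ℝ → ℝ) : Prop :=
  Monotone f ∧ ∀ j, j ≤ 13 → f (qpt l b j) = qpt l b' j

end

section
variable {l b : ℝ}

lemma lam_gt (hpos : 0 < l) (hroot : l ^ 4 = l ^ 2 + 1) : 1.272 < l := by
  nlinarith [sq_nonneg l, sq_nonneg (l^2 - 1.618), sq_nonneg (l - 1.272), sq_nonneg (l+1.272)]

lemma lam_lt (hpos : 0 < l) (hroot : l ^ 4 = l ^ 2 + 1) : l < 1.2721 := by
  nlinarith [sq_nonneg l, sq_nonneg (l^2 - 1.618), sq_nonneg (l - 1.2721), sq_nonneg (l+1.2721)]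

lemma qids (hpos : 0 < l) (hroot : l ^ 4 = l ^ 2 + 1) (hgt : 1 < l) (b : ℝ) :
    l * qC1 l b + 1 = qX1 b ∧ -(l * qC1 l b) + b = qX1 b ∧
    -(l * qC2 l b) + b = qY1 b ∧ l * qC2 l b - 1 = qY1 b ∧
    l * qX5 l b - 1 = qC1 l b ∧ l * qY5 l b + 1 = qC2 l b ∧
    l * (-qA l) + 1 = -qA l ∧ l * qA l - 1 = qA l := by
  have hne : l ≠ 0 := by linarith
  have hm1 : l - 1 ≠ 0 := by intro h; rw [sub_eq_zero] at h; linarith [h]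
  refine ⟨?_, ?_, ?_, ?_, ?_, ?_, ?_, ?_⟩
  · simp only [qC1, qX1]; field_simp; try ring
  · simp only [qC1, qX1]; field_simp; try ring
  · simp only [qC2, qY1]; field_simp; try ring
  · simp only [qC2, qY1]; field_simp; try ring
  · simp only [qX5, qX4, qX3, qX2, qX1, qC1]
    rw [eq_div_iff (by intro h; apply hne; linarith [h] : (2*l) ≠ 0)]
    linear_combination (-(1+b)*l^2 + 2*l + (b-1)) * hroot
  · simp only [qY5, qY4, qY3, qY2, qY1, qC2]
    rw [eq_div_iff (by intro h; apply hne; linarith [h] : (2*l) ≠ 0)]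
    linear_combination ((1-b)*l^2 - 2*l + (b+1)) * hroot
  · simp only [qA]; field_simp; try ring
  · simp only [qA]; field_simp; try ring

end

section
variable {l b : ℝ}

lemma qchain (hpos : 0 < l) (hroot : l ^ 4 = l ^ 2 + 1)
    (hb1 : -0.001 < b) (hb2 : b < 0.001) :
    ∀ j < 13, qpt l b j < qpt l b (j+1) := by
  have hl1 : 1.272 < l := lam_gt hpos hroot
  have hl2 : l < 1.2721 := lam_lt hpos hroot
  have h2l : (0:ℝ) < 2*l := by linarith
  have hm1 : (0:ℝ) < l - 1 := by linarith
  have p2a : 1.6179 < l^2 := by nlinarith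
  have p2b : l^2 < 1.6183 := by nlinarith
  have p3a : 2.0580 < l^3 := by
    nlinarith [mul_lt_mul_of_pos_left p2a hpos,
      mul_lt_mul_of_pos_right hl1 (show (0:ℝ) < 1.6179 by norm_num)]
  have p3b : l^3 < 2.0590 := by
    nlinarith [mul_lt_mul_of_pos_left p2b hpos,
      mul_lt_mul_of_pos_right hl2 (show (0:ℝ) < 1.6183 by norm_num)]
  have p4a : 2.6179 < l^4 := by rw [hroot]; linarith
  have p4b : l^4 < 2.6183 := by rw [hroot]; linarith
  have lp1 : (0:ℝ) < l := hpos
  have lp2 : (0:ℝ) < l^2 := by positivity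
  have lp3 : (0:ℝ) < l^3 := by positivity
  have lp4 : (0:ℝ) < l^4 := by positivity
  have q1a : -0.0013 < b*l := by linarith [mul_lt_mul_of_pos_right hb1 lp1, hl2, lp1]
  have q1b : b*l < 0.0013 := by linarith [mul_lt_mul_of_pos_right hb2 lp1, hl2, lp1]
  have q2a : -0.0017 < b*l^2 := by linarith [mul_lt_mul_of_pos_right hb1 lp2, p2b, lp2]
  have q2b : b*l^2 < 0.0017 := by linarith [mul_lt_mul_of_pos_right hb2 lp2, p2b, lp2]
  have q3a : -0.0021 < b*l^3 := by linarith [mul_lt_mul_of_pos_right hb1 lp3, p3b, lp3]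
  have q3b : b*l^3 < 0.0021 := by linarith [mul_lt_mul_of_pos_right hb2 lp3, p3b, lp3]
  have q4a : -0.0027 < b*l^4 := by linarith [mul_lt_mul_of_pos_right hb1 lp4, p4b, lp4]
  have q4b : b*l^4 < 0.0027 := by linarith [mul_lt_mul_of_pos_right hb2 lp4, p4b, lp4]
  have c1 : -qA l < qY1 b := by
    simp only [qA, qY1]
    rw [neg_lt, lt_div_iff₀ hm1]
    linarith [mul_lt_mul_of_pos_right hb2 hm1, mul_lt_mul_of_pos_right hb1 hm1]
  have c2 : qY1 b < qY5 l b := by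
    simp only [qY5, qY4, qY3, qY2, qY1]; linarith
  have c3 : qY5 l b < qY3 l b := by
    simp only [qY5, qY4, qY3, qY2, qY1]; linarith
  have c4 : qY3 l b < qX4 l b := by
    simp only [qY3, qY2, qY1, qX4, qX3, qX2, qX1]; linarith
  have c5 : qX4 l b < qC1 l b := by
    simp only [qX4, qX3, qX2, qX1, qC1]
    rw [lt_div_iff₀ h2l]
    linarith
  have c6 : qC1 l b < qX2 l b := by
    simp only [qX2, qX1, qC1]
    rw [div_lt_iff₀ h2l]
    linarith
  have c7 : qX2 l b < qY2 l b := by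
    simp only [qX2, qX1, qY2, qY1]; linarith
  have c8 : qY2 l b < qC2 l b := by
    simp only [qY2, qY1, qC2]
    rw [lt_div_iff₀ h2l]
    linarith
  have c9 : qC2 l b < qY4 l b := by
    simp only [qY4, qY3, qY2, qY1, qC2]
    rw [div_lt_iff₀ h2l]
    linarith
  have c10 : qY4 l b < qX3 l b := by
    simp only [qY4, qY3, qY2, qY1, qX3, qX2, qX1]; linarith
  have c11 : qX3 l b < qX5 l b := by
    simp only [qX5, qX4, qX3, qX2, qX1]; linarith
  have c12 : qX5 l b < qX1 b := by
    simp only [qX5, qX4, qX3, qX2, qX1]; linarith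
  have c13 : qX1 b < qA l := by
    simp only [qX1, qA]
    rw [lt_div_iff₀ hm1]
    linarith
  intro j hj
  interval_cases j
  exacts [c1, c2, c3, c4, c5, c6, c7, c8, c9, c10, c11, c12, c13]

end

section
variable {l b b' : ℝ}

lemma qkey (hpos : 0 < l) (hroot : l ^ 4 = l ^ 2 + 1)
    (hb1 : -0.001 < b) (hb2 : b < 0.001) (hb1' : -0.001 < b') (hb2' : b' < 0.001) :
    ∃ f : ℝ →ᵇ ℝ, Scond l b b' ⇑f ∧ (∀ x, f x = Tform l b b' ⇑f x) ∧
      ∀ g : ℝ →ᵇ ℝ, Scond l b b' ⇑g → (∀ x, g x = Tform l b b' ⇑g x) → g = f := by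
  have hl1 : 1.272 < l := lam_gt hpos hroot
  have hgt : 1 < l := by linarith
  have hne : l ≠ 0 := by linarith
  obtain ⟨j1, j2, j3, j4, j5, j6, j7, j8⟩ := qids hpos hroot hgt b
  obtain ⟨k1, k2, k3, k4, k5, k6, k7, k8⟩ := qids hpos hroot hgt b'
  have hcb := qchain hpos hroot hb1 hb2
  have hcb' := qchain hpos hroot hb1' hb2'
  have hmb := chain_mono hcb
  have hsb := chain_mono_lt hcb
  have hmb' := chain_mono hcb'
  have hsb' := chain_mono_lt hcb'
  have pAC1 : -qA l ≤ qC1 l b := hmb 0 5 (by norm_num) (by norm_num)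
  have pY1C1 : qY1 b ≤ qC1 l b := hmb 1 5 (by norm_num) (by norm_num)
  have pY5C1 : qY5 l b ≤ qC1 l b := hmb 2 5 (by norm_num) (by norm_num)
  have pY3C1 : qY3 l b ≤ qC1 l b := hmb 3 5 (by norm_num) (by norm_num)
  have pX4C1 : qX4 l b ≤ qC1 l b := hmb 4 5 (by norm_num) (by norm_num)
  have pC1X2 : qC1 l b < qX2 l b := hsb 5 6 (by norm_num) (by norm_num)
  have pX2C2 : qX2 l b ≤ qC2 l b := hmb 6 8 (by norm_num) (by norm_num)
  have pC1Y2 : qC1 l b < qY2 l b := hsb 5 7 (by norm_num) (by norm_num)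
  have pY2C2 : qY2 l b ≤ qC2 l b := hmb 7 8 (by norm_num) (by norm_num)
  have pC1C2 : qC1 l b < qC2 l b := hsb 5 8 (by norm_num) (by norm_num)
  have pC1Y4 : qC1 l b < qY4 l b := hsb 5 9 (by norm_num) (by norm_num)
  have pC2Y4 : qC2 l b < qY4 l b := hsb 8 9 (by norm_num) (by norm_num)
  have pC1X3 : qC1 l b < qX3 l b := hsb 5 10 (by norm_num) (by norm_num)
  have pC2X3 : qC2 l b < qX3 l b := hsb 8 10 (by norm_num) (by norm_num)
  have pC1X5 : qC1 l b < qX5 l b := hsb 5 11 (by norm_num) (by norm_num)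
  have pC2X5 : qC2 l b < qX5 l b := hsb 8 11 (by norm_num) (by norm_num)
  have pC1X1 : qC1 l b < qX1 b := hsb 5 12 (by norm_num) (by norm_num)
  have pC2X1 : qC2 l b < qX1 b := hsb 8 12 (by norm_num) (by norm_num)
  have pC1A : qC1 l b < qA l := hsb 5 13 (by norm_num) (by norm_num)
  have pC2A : qC2 l b < qA l := hsb 8 13 (by norm_num) (by norm_num)
  have pC1C2' : qC1 l b' < qC2 l b' := hsb' 5 8 (by norm_num) (by norm_num)
  have hdiv : ∀ u v : ℝ, u ≤ v → u / l ≤ v / l := by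
    intro u v h
    rw [div_le_div_iff_of_pos_right hpos]
    nlinarith [mul_le_mul_of_nonneg_right h hpos.le]
  -- the operator maps S to S
  have hTmem : ∀ f : ℝ →ᵇ ℝ, Scond l b b' ⇑f →
      ∃ g : ℝ →ᵇ ℝ, (∀ x, g x = Tform l b b' ⇑f x) ∧ Scond l b b' ⇑g := by
    intro f hf
    obtain ⟨hmono, hvals⟩ := hf
    have v0 : f (-qA l) = -qA l := hvals 0 (by norm_num)
    have v1 : f (qY1 b) = qY1 b' := hvals 1 (by norm_num)
    have v2 : f (qY5 l b) = qY5 l b' := hvals 2 (by norm_num)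
    have v3 : f (qY3 l b) = qY3 l b' := hvals 3 (by norm_num)
    have v4 : f (qX4 l b) = qX4 l b' := hvals 4 (by norm_num)
    have v5 : f (qC1 l b) = qC1 l b' := hvals 5 (by norm_num)
    have v6 : f (qX2 l b) = qX2 l b' := hvals 6 (by norm_num)
    have v7 : f (qY2 l b) = qY2 l b' := hvals 7 (by norm_num)
    have v8 : f (qC2 l b) = qC2 l b' := hvals 8 (by norm_num)
    have v9 : f (qY4 l b) = qY4 l b' := hvals 9 (by norm_num)
    have v10 : f (qX3 l b) = qX3 l b' := hvals 10 (by norm_num)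
    have v11 : f (qX5 l b) = qX5 l b' := hvals 11 (by norm_num)
    have v12 : f (qX1 b) = qX1 b' := hvals 12 (by norm_num)
    have v13 : f (qA l) = qA l := hvals 13 (by norm_num)
    have hcont : Continuous (Tform l b b' ⇑f) := by
      unfold Tform
      apply Continuous.if_le
      · exact ((f.continuous.comp (by continuity)).sub continuous_const).div_const l
      · apply Continuous.if_le
        · exact (continuous_const.sub (f.continuous.comp (by continuity))).div_const l
        · exact ((f.continuous.comp (by continuity)).add continuous_const).div_const l
        · exact continuous_id
        · exact continuous_const
        · intro x hx
          rw [hx, j3, j4, v1]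
          have : b' - qY1 b' = qY1 b' + 1 := by simp only [qY1]; ring
          rw [this]
      · exact continuous_id
      · exact continuous_const
      · intro x hx
        rw [hx, if_pos pC1C2.le, j1, j2, v12]
        have : qX1 b' - 1 = b' - qX1 b' := by simp only [qX1]; ring
        rw [this]
    have hnorm : ∀ x : ℝ, ‖Tform l b b' ⇑f x‖ ≤ ‖f‖ + 2 := by
      intro x
      have hfy : ∀ y : ℝ, |f y| ≤ ‖f‖ := by
        intro y
        rw [← Real.norm_eq_abs]
        exact f.norm_coe_le_norm y
      have hn0 : (0:ℝ) ≤ ‖f‖ := norm_nonneg f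
      rw [Real.norm_eq_abs]
      unfold Tform
      split_ifs with h1 h2
      · have h3 := abs_le.1 (hfy (l*x+1))
        have h4 : |(f (l*x+1) - 1)/l| ≤ |f (l*x+1) - 1| :=
          div_le_self (abs_nonneg _) hgt.le |>.trans_eq' (by rw [abs_div, abs_of_pos hpos])
        have h5 : |f (l*x+1) - 1| ≤ ‖f‖ + 1 := abs_le.2 ⟨by linarith, by linarith⟩
        linarith
      · have h3 := abs_le.1 (hfy (-(l*x)+b))
        have h4 : |(b' - f (-(l*x)+b))/l| ≤ |b' - f (-(l*x)+b)| :=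
          div_le_self (abs_nonneg _) hgt.le |>.trans_eq' (by rw [abs_div, abs_of_pos hpos])
        have h5 : |b' - f (-(l*x)+b)| ≤ ‖f‖ + 1 := abs_le.2 ⟨by linarith, by linarith⟩
        linarith
      · have h3 := abs_le.1 (hfy (l*x-1))
        have h4 : |(f (l*x-1)+1)/l| ≤ |f (l*x-1)+1| :=
          div_le_self (abs_nonneg _) hgt.le |>.trans_eq' (by rw [abs_div, abs_of_pos hpos])
        have h5 : |f (l*x-1)+1| ≤ ‖f‖ + 1 := abs_le.2 ⟨by linarith, by linarith⟩
        linarith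
    -- helper bounds for monotonicity
    have hleftlim : ∀ x, x ≤ qC1 l b → (f (l*x+1) - 1)/l ≤ qC1 l b' := by
      intro x hx
      have h1 : l*x+1 ≤ qX1 b := by
        rw [← j1]
        have := mul_le_mul_of_nonneg_left hx hpos.le
        linarith
      have h2 : f (l*x+1) ≤ qX1 b' := v12 ▸ hmono h1
      have h3 : (f (l*x+1) - 1)/l ≤ (qX1 b' - 1)/l := hdiv _ _ (by linarith)
      have h4 : (qX1 b' - 1)/l = qC1 l b' := by
        rw [div_eq_iff hne]; linear_combination -k1
      linarith
    have hmidlo : ∀ x, qC1 l b ≤ x → qC1 l b' ≤ (b' - f (-(l*x)+b))/l := by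
      intro x hx
      have h1 : -(l*x)+b ≤ qX1 b := by
        rw [← j2]
        have := mul_le_mul_of_nonneg_left hx hpos.le
        linarith
      have h2 : f (-(l*x)+b) ≤ qX1 b' := v12 ▸ hmono h1
      have h3 : (b' - qX1 b')/l ≤ (b' - f (-(l*x)+b))/l := hdiv _ _ (by linarith)
      have h4 : (b' - qX1 b')/l = qC1 l b' := by
        rw [div_eq_iff hne]; linear_combination k2
      linarith
    have hmidhi : ∀ x, x ≤ qC2 l b → (b' - f (-(l*x)+b))/l ≤ qC2 l b' := by
      intro x hx
      have h1 : qY1 b ≤ -(l*x)+b := by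
        rw [← j3]
        have := mul_le_mul_of_nonneg_left hx hpos.le
        linarith
      have h2 : qY1 b' ≤ f (-(l*x)+b) := v1 ▸ hmono h1
      have h3 : (b' - f (-(l*x)+b))/l ≤ (b' - qY1 b')/l := hdiv _ _ (by linarith)
      have h4 : (b' - qY1 b')/l = qC2 l b' := by
        rw [div_eq_iff hne]; linear_combination k3
      linarith
    have hrightlo : ∀ x, qC2 l b ≤ x → qC2 l b' ≤ (f (l*x-1)+1)/l := by
      intro x hx
      have h1 : qY1 b ≤ l*x-1 := by
        rw [← j4]
        have := mul_le_mul_of_nonneg_left hx hpos.le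
        linarith
      have h2 : qY1 b' ≤ f (l*x-1) := v1 ▸ hmono h1
      have h3 : (qY1 b' + 1)/l ≤ (f (l*x-1)+1)/l := hdiv _ _ (by linarith)
      have h4 : (qY1 b' + 1)/l = qC2 l b' := by
        rw [div_eq_iff hne]; linear_combination -k4
      linarith
    have hgmono : Monotone (Tform l b b' ⇑f) := by
      intro x y hxy
      unfold Tform
      rcases le_or_gt x (qC1 l b) with hx1 | hx1
      · rw [if_pos hx1]
        rcases le_or_gt y (qC1 l b) with hy1 | hy1
        · rw [if_pos hy1]
          refine hdiv _ _ ?_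
          have := hmono (show l*x+1 ≤ l*y+1 by
            have := mul_le_mul_of_nonneg_left hxy hpos.le; linarith)
          linarith
        · rw [if_neg (not_le.2 hy1)]
          rcases le_or_gt y (qC2 l b) with hy2 | hy2
          · rw [if_pos hy2]
            exact (hleftlim x hx1).trans (hmidlo y hy1.le)
          · rw [if_neg (not_le.2 hy2)]
            exact (hleftlim x hx1).trans (pC1C2'.le.trans (hrightlo y hy2.le))
      · rw [if_neg (not_le.2 hx1)]
        have hy1 : ¬ y ≤ qC1 l b := not_le.2 (hx1.trans_le hxy)
        rw [if_neg hy1]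
        rcases le_or_gt x (qC2 l b) with hx2 | hx2
        · rw [if_pos hx2]
          rcases le_or_gt y (qC2 l b) with hy2 | hy2
          · rw [if_pos hy2]
            refine hdiv _ _ ?_
            have := hmono (show -(l*y)+b ≤ -(l*x)+b by
              have := mul_le_mul_of_nonneg_left hxy hpos.le; linarith)
            linarith
          · rw [if_neg (not_le.2 hy2)]
            exact (hmidhi x hx2).trans (hrightlo y hy2.le)
        · have hy2 : ¬ y ≤ qC2 l b := not_le.2 (hx2.trans_le hxy)
          rw [if_neg (not_le.2 hx2), if_neg hy2]
          refine hdiv _ _ ?_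
          have := hmono (show l*x-1 ≤ l*y-1 by
            have := mul_le_mul_of_nonneg_left hxy hpos.le; linarith)
          linarith
    have hgvals : ∀ j, j ≤ 13 → Tform l b b' ⇑f (qpt l b j) = qpt l b' j := by
      intro j hj
      interval_cases j
      · show Tform l b b' ⇑f (-qA l) = -qA l
        unfold Tform
        rw [if_pos pAC1, j7, v0, div_eq_iff hne]
        linear_combination -j7
      · show Tform l b b' ⇑f (qY1 b) = qY1 b'
        unfold Tform
        rw [if_pos pY1C1, show l * qY1 b + 1 = qY2 l b from rfl, v7, div_eq_iff hne]
        simp only [qY2]; ring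
      · show Tform l b b' ⇑f (qY5 l b) = qY5 l b'
        unfold Tform
        rw [if_pos pY5C1, j6, v8, div_eq_iff hne]
        linear_combination -k6
      · show Tform l b b' ⇑f (qY3 l b) = qY3 l b'
        unfold Tform
        rw [if_pos pY3C1, show l * qY3 l b + 1 = qY4 l b from rfl, v9, div_eq_iff hne]
        simp only [qY4]; ring
      · show Tform l b b' ⇑f (qX4 l b) = qX4 l b'
        unfold Tform
        rw [if_pos pX4C1, show l * qX4 l b + 1 = qX5 l b from rfl, v11, div_eq_iff hne]
        simp only [qX5]; ring
      · show Tform l b b' ⇑f (qC1 l b) = qC1 l b'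
        unfold Tform
        rw [if_pos le_rfl, j1, v12, div_eq_iff hne]
        linear_combination -k1
      · show Tform l b b' ⇑f (qX2 l b) = qX2 l b'
        unfold Tform
        rw [if_neg (not_le.2 pC1X2), if_pos pX2C2,
          show -(l * qX2 l b) + b = qX3 l b from rfl, v10, div_eq_iff hne]
        simp only [qX3]; ring
      · show Tform l b b' ⇑f (qY2 l b) = qY2 l b'
        unfold Tform
        rw [if_neg (not_le.2 pC1Y2), if_pos pY2C2,
          show -(l * qY2 l b) + b = qY3 l b from rfl, v3, div_eq_iff hne]
        simp only [qY3]; ring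
      · show Tform l b b' ⇑f (qC2 l b) = qC2 l b'
        unfold Tform
        rw [if_neg (not_le.2 pC1C2), if_pos le_rfl, j3, v1, div_eq_iff hne]
        linear_combination k3
      · show Tform l b b' ⇑f (qY4 l b) = qY4 l b'
        unfold Tform
        rw [if_neg (not_le.2 pC1Y4), if_neg (not_le.2 pC2Y4),
          show l * qY4 l b - 1 = qY5 l b from rfl, v2, div_eq_iff hne]
        simp only [qY5]; ring
      · show Tform l b b' ⇑f (qX3 l b) = qX3 l b'
        unfold Tform
        rw [if_neg (not_le.2 pC1X3), if_neg (not_le.2 pC2X3),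
          show l * qX3 l b - 1 = qX4 l b from rfl, v4, div_eq_iff hne]
        simp only [qX4]; ring
      · show Tform l b b' ⇑f (qX5 l b) = qX5 l b'
        unfold Tform
        rw [if_neg (not_le.2 pC1X5), if_neg (not_le.2 pC2X5), j5, v5, div_eq_iff hne]
        linear_combination -k5
      · show Tform l b b' ⇑f (qX1 b) = qX1 b'
        unfold Tform
        rw [if_neg (not_le.2 pC1X1), if_neg (not_le.2 pC2X1),
          show l * qX1 b - 1 = qX2 l b from rfl, v6, div_eq_iff hne]
        simp only [qX2]; ring
      · show Tform l b b' ⇑f (qA l) = qA l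
        unfold Tform
        rw [if_neg (not_le.2 pC1A), if_neg (not_le.2 pC2A), j8, v13, div_eq_iff hne]
        linear_combination -j8
    exact ⟨BoundedContinuousFunction.ofNormedAddCommGroup _ hcont (‖f‖+2) hnorm,
      fun x => rfl, hgmono, hgvals⟩
  -- set up the contraction on the subtype
  set S : Set (ℝ →ᵇ ℝ) := {f | Scond l b b' ⇑f} with hSdef
  have hclosed : IsClosed S := by
    have hrepr : S = {f : ℝ →ᵇ ℝ | Monotone ⇑f} ∩
        ⋂ (j : ℕ), ⋂ (_ : j ≤ 13), {f : ℝ →ᵇ ℝ | f (qpt l b j) = qpt l b' j} := by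
      ext f
      simp only [hSdef, Scond, Set.mem_setOf_eq, Set.mem_inter_iff, Set.mem_iInter]
    rw [hrepr]
    refine IsClosed.inter ?_ (isClosed_iInter fun j => isClosed_iInter fun _ =>
      isClosed_eq (continuous_eval_const _) continuous_const)
    have hrepr2 : {f : ℝ →ᵇ ℝ | Monotone ⇑f} =
        ⋂ (p : ℝ × ℝ), ⋂ (_ : p.1 ≤ p.2), {f : ℝ →ᵇ ℝ | f p.1 ≤ f p.2} := by
      ext f
      simp only [Set.mem_setOf_eq, Set.mem_iInter]
      exact ⟨fun h p hp => h hp, fun h x y hxy => h (x, y) hxy⟩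
    rw [hrepr2]
    exact isClosed_iInter fun p => isClosed_iInter fun _ =>
      isClosed_le (continuous_eval_const _)
        (continuous_eval_const _)
  have hWmem : ∃ f : ℝ →ᵇ ℝ, f ∈ S := by
    have hsle : ∀ i < 13, qpt l b' i ≤ qpt l b' (i+1) := fun i hi => (hcb' i hi).le
    have hbd : ∀ x : ℝ, ‖interp 13 (qpt l b) (qpt l b') x‖ ≤ qA l := by
      intro x
      have h := interp_bounds hcb hsle x
      have h0 : qpt l b' 0 = -qA l := rfl
      have h13 : qpt l b' 13 = qA l := rfl
      rw [h0] at h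
      rw [h13] at h
      rw [Real.norm_eq_abs, abs_le]
      exact ⟨by linarith [h.1], h.2⟩
    exact ⟨BoundedContinuousFunction.ofNormedAddCommGroup _ interp_cont (qA l) hbd,
      interp_mono hcb hcb', fun j hj => interp_value hcb hj⟩
  choose Tg hTgapp hTgmem using hTmem
  obtain ⟨W, hW⟩ := hWmem
  haveI : Nonempty ↥S := ⟨⟨W, hW⟩⟩
  haveI : CompleteSpace ↥S := hclosed.completeSpace_coe
  set TT : ↥S → ↥S := fun F => ⟨Tg F.1 F.2, hTgmem F.1 F.2⟩ with hTT
  have hdistle : ∀ F G : ↥S, dist (TT F) (TT G) ≤ (1/l) * dist F G := by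
    intro F G
    have hC0 : 0 ≤ (1/l) * dist F G := mul_nonneg (by positivity) dist_nonneg
    rw [Subtype.dist_eq]
    refine (BoundedContinuousFunction.dist_le hC0).2 ?_
    intro x
    have hbase : ∀ y : ℝ, |F.1 y - G.1 y| ≤ dist F G := by
      intro y
      rw [← Real.dist_eq]
      exact (BoundedContinuousFunction.dist_coe_le_dist y).trans (le_of_eq rfl)
    rw [Real.dist_eq, show (TT F).1 = Tg F.1 F.2 from rfl, show (TT G).1 = Tg G.1 G.2 from rfl,
      hTgapp F.1 F.2 x, hTgapp G.1 G.2 x]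
    unfold Tform
    split_ifs with h1 h2
    · have heq : (F.1 (l*x+1) - 1)/l - (G.1 (l*x+1) - 1)/l = (F.1 (l*x+1) - G.1 (l*x+1))/l := by
        ring
      rw [heq, abs_div, abs_of_pos hpos]
      have h3 := hbase (l*x+1)
      have h4 := hdiv _ _ h3
      have h5 : dist F G / l = 1/l * dist F G := by ring
      linarith
    · have heq : (b' - F.1 (-(l*x)+b))/l - (b' - G.1 (-(l*x)+b))/l
          = (G.1 (-(l*x)+b) - F.1 (-(l*x)+b))/l := by ring
      rw [heq, abs_div, abs_of_pos hpos]
      have h3 := hbase (-(l*x)+b)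
      rw [abs_sub_comm] at h3
      have h4 := hdiv _ _ h3
      have h5 : dist F G / l = 1/l * dist F G := by ring
      linarith
    · have heq : (F.1 (l*x-1)+1)/l - (G.1 (l*x-1)+1)/l = (F.1 (l*x-1) - G.1 (l*x-1))/l := by
        ring
      rw [heq, abs_div, abs_of_pos hpos]
      have h3 := hbase (l*x-1)
      have h4 := hdiv _ _ h3
      have h5 : dist F G / l = 1/l * dist F G := by ring
      linarith
  have hCW : ContractingWith ⟨1/l, by positivity⟩ TT := by
    constructor
    · refine NNReal.coe_lt_coe.1 ?_
      push_cast
      show (1 / l : ℝ) < 1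
      rw [div_lt_one hpos]
      exact hgt
    · exact LipschitzWith.of_dist_le_mul fun F G => hdistle F G
  set F : ↥S := ContractingWith.fixedPoint TT hCW with hF
  have hfix : TT F = F := hCW.fixedPoint_isFixedPt
  refine ⟨F.1, F.2, ?_, ?_⟩
  · intro x
    conv_lhs => rw [← hfix]
    exact hTgapp F.1 F.2 x
  · intro g hg1 hg2
    have hgS : g ∈ S := hg1
    have hfixg : Function.IsFixedPt TT ⟨g, hgS⟩ := by
      apply Subtype.ext
      apply BoundedContinuousFunction.ext
      intro x
      rw [show (TT ⟨g, hgS⟩).1 = Tg g hgS from rfl, hTgapp g hgS x]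
      exact (hg2 x).symm
    have := hCW.fixedPoint_unique hfixg
    rw [← hF] at this
    exact congrArg Subtype.val this

end
lemma qmap_eq (l c x : ℝ) :
    qmap l c x = if x ≤ qC1 l c then l*x+1 else if x ≤ qC2 l c then -l*x+c else l*x-1 := rfl

section
variable {l b b' : ℝ}

lemma qbranch (hpos : 0 < l) (hroot : l ^ 4 = l ^ 2 + 1)
    (hb1 : -0.001 < b) (hb2 : b < 0.001) (hb1' : -0.001 < b') (hb2' : b' < 0.001)
    {f : ℝ → ℝ} (hS : Scond l b b' f) (hT : ∀ x, f x = Tform l b b' f x) :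
    (∀ x, x ≤ qC1 l b → f (l*x+1) = l * f x + 1) ∧
    (∀ x, qC1 l b ≤ x → x ≤ qC2 l b → f (-(l*x)+b) = b' - l * f x) ∧
    (∀ x, qC2 l b ≤ x → f (l*x-1) = l * f x - 1) := by
  have hl1 : 1.272 < l := lam_gt hpos hroot
  have hgt : 1 < l := by linarith
  have hne : l ≠ 0 := by linarith
  obtain ⟨j1, j2, j3, j4, j5, j6, j7, j8⟩ := qids hpos hroot hgt b
  obtain ⟨k1, k2, k3, k4, k5, k6, k7, k8⟩ := qids hpos hroot hgt b'
  have hcb := qchain hpos hroot hb1 hb2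
  have hsb := chain_mono_lt hcb
  have pC1C2 : qC1 l b < qC2 l b := hsb 5 8 (by norm_num) (by norm_num)
  obtain ⟨hmono, hvals⟩ := hS
  have v1 : f (qY1 b) = qY1 b' := hvals 1 (by norm_num)
  have v5 : f (qC1 l b) = qC1 l b' := hvals 5 (by norm_num)
  have v8 : f (qC2 l b) = qC2 l b' := hvals 8 (by norm_num)
  have v12 : f (qX1 b) = qX1 b' := hvals 12 (by norm_num)
  refine ⟨?_, ?_, ?_⟩
  · intro x hx
    have h := hT x
    rw [Tform, if_pos hx, eq_div_iff hne] at h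
    linarith [h]
  · intro x hx1 hx2
    rcases eq_or_lt_of_le hx1 with heq | hlt
    · rw [← heq, j2, v12, v5]
      linear_combination -k2
    · have h := hT x
      rw [Tform, if_neg (not_le.2 hlt), if_pos hx2, eq_div_iff hne] at h
      linarith [h]
  · intro x hx
    rcases eq_or_lt_of_le hx with heq | hlt
    · rw [← heq, j4, v1, v8]
      linear_combination -k4
    · have h := hT x
      rw [Tform, if_neg (not_le.2 (pC1C2.trans hlt)), if_neg (not_le.2 hlt),
        eq_div_iff hne] at h
      linarith [h]

lemma qconj (hpos : 0 < l) (hroot : l ^ 4 = l ^ 2 + 1)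
    (hb1 : -0.001 < b) (hb2 : b < 0.001) (hb1' : -0.001 < b') (hb2' : b' < 0.001)
    {f : ℝ → ℝ} (hS : Scond l b b' f) (hT : ∀ x, f x = Tform l b b' f x) :
    ∀ x, f (qmap l b x) = qmap l b' (f x) := by
  have hl1 : 1.272 < l := lam_gt hpos hroot
  have hgt : 1 < l := by linarith
  have hne : l ≠ 0 := by linarith
  obtain ⟨EL, EM, ER⟩ := qbranch hpos hroot hb1 hb2 hb1' hb2' hS hT
  obtain ⟨k1, k2, k3, k4, k5, k6, k7, k8⟩ := qids hpos hroot hgt b'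
  have hcb' := qchain hpos hroot hb1' hb2'
  have hsb' := chain_mono_lt hcb'
  have pC1C2' : qC1 l b' < qC2 l b' := hsb' 5 8 (by norm_num) (by norm_num)
  have v5 : f (qC1 l b) = qC1 l b' := hS.2 5 (by norm_num)
  have v8 : f (qC2 l b) = qC2 l b' := hS.2 8 (by norm_num)
  intro x
  rcases le_or_gt x (qC1 l b) with hx | hx
  · rw [qmap_eq, if_pos hx, EL x hx]
    have hfx : f x ≤ qC1 l b' := by rw [← v5]; exact hS.1 hx
    rw [qmap_eq, if_pos hfx]
  · rcases le_or_gt x (qC2 l b) with hx2 | hx2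
    · rw [qmap_eq, if_neg (not_le.2 hx), if_pos hx2,
        show -l*x+b = -(l*x)+b by ring, EM x hx.le hx2]
      have hlo : qC1 l b' ≤ f x := by rw [← v5]; exact hS.1 hx.le
      have hhi : f x ≤ qC2 l b' := by rw [← v8]; exact hS.1 hx2
      rcases le_or_gt (f x) (qC1 l b') with hfx | hfx
      · have heq : f x = qC1 l b' := le_antisymm hfx hlo
        rw [qmap_eq, if_pos hfx, heq]
        linear_combination k2 - k1
      · rw [qmap_eq, if_neg (not_le.2 hfx), if_pos hhi]
        ring
    · rw [qmap_eq, if_neg (not_le.2 (by linarith : qC1 l b < x)),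
        if_neg (not_le.2 hx2), ER x hx2.le]
      have hge : qC2 l b' ≤ f x := by rw [← v8]; exact hS.1 hx2.le
      rcases le_or_gt (f x) (qC2 l b') with hfx | hfx
      · have heq : f x = qC2 l b' := le_antisymm hfx hge
        rw [qmap_eq, if_neg (not_le.2 (by linarith : qC1 l b' < f x)), if_pos hfx, heq]
        linear_combination -k3 + k4
      · rw [qmap_eq, if_neg (not_le.2 (by linarith : qC1 l b' < f x)),
          if_neg (not_le.2 hfx)]

end

/-- Non-rigidity in the bimodal family: let `λ > 0` satisfy `λ⁴ = λ² + 1` and set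
`a = 1/(λ−1)`. There exists `ε > 0` such that for all `b, b′ ∈ (−ε, ε)` the maps `q_{λ,b}`
and `q_{λ,b′}` are topologically conjugate by a homeomorphism `h` of `[−a, a]`
(a continuous bijection of the compact interval `[−a,a]`, hence a homeomorphism, with
`h ∘ q_{λ,b} = q_{λ,b′} ∘ h`). -/
theorem nonrigidity_bimodal (lam : ℝ) (hpos : 0 < lam) (hroot : lam ^ 4 = lam ^ 2 + 1) :
    ∃ ε > (0 : ℝ), ∀ b ∈ Set.Ioo (-ε) ε, ∀ b' ∈ Set.Ioo (-ε) ε,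
      ∃ h : ℝ → ℝ,
        Set.BijOn h (Set.Icc (-(1 / (lam - 1))) (1 / (lam - 1)))
          (Set.Icc (-(1 / (lam - 1))) (1 / (lam - 1))) ∧
        ContinuousOn h (Set.Icc (-(1 / (lam - 1))) (1 / (lam - 1))) ∧
        ∀ x ∈ Set.Icc (-(1 / (lam - 1))) (1 / (lam - 1)),
          h (qmap lam b x) = qmap lam b' (h x) := by
  have hl1 : 1.272 < lam := lam_gt hpos hroot
  have hgt : 1 < lam := by linarith
  have hne : lam ≠ 0 := by linarith
  refine ⟨0.001, by norm_num, ?_⟩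
  rintro b ⟨hb1, hb2⟩ b' ⟨hb1', hb2'⟩
  rw [show -(0.001 : ℝ) = -0.001 by norm_num] at hb1 hb1'
  obtain ⟨F, hFS, hFT, hFuniq⟩ := qkey hpos hroot hb1 hb2 hb1' hb2'
  obtain ⟨G, hGS, hGT, hGuniq⟩ := qkey hpos hroot hb1' hb2' hb1 hb2
  obtain ⟨EL, EM, ER⟩ := qbranch hpos hroot hb1 hb2 hb1' hb2' hFS hFT
  obtain ⟨EL', EM', ER'⟩ := qbranch hpos hroot hb1' hb2' hb1 hb2 hGS hGT
  obtain ⟨IF1, hIS1, hIT1, hIU1⟩ := qkey hpos hroot hb1 hb2 hb1 hb2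
  obtain ⟨IF2, hIS2, hIT2, hIU2⟩ := qkey hpos hroot hb1' hb2' hb1' hb2'
  have hA0 : 0 < qA lam := by
    have : 0 < lam - 1 := by linarith
    simp only [qA]; positivity
  -- the clamped identity as a bounded continuous function
  have hιbd : ∀ x : ℝ, ‖clmp (-qA lam) (qA lam) x‖ ≤ qA lam := by
    intro x
    have := clmp_mem (-qA lam) (qA lam) x (by linarith)
    rw [Real.norm_eq_abs, abs_le]
    exact ⟨this.1, this.2⟩
  set ι : ℝ →ᵇ ℝ := BoundedContinuousFunction.ofNormedAddCommGroup _
    (clmp_cont (-qA lam) (qA lam)) (qA lam) hιbd with hι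
  have hιapp : ∀ x, ι x = clmp (-qA lam) (qA lam) x := fun _ => rfl
  have hιS : ∀ c, -0.001 < c → c < 0.001 → Scond lam c c ⇑ι := by
    intro c hc1 hc2
    have hmbc := chain_mono (qchain hpos hroot hc1 hc2)
    refine ⟨clmp_mono _ _, ?_⟩
    intro j hj
    have h1 : -qA lam ≤ qpt lam c j := hmbc 0 j (by omega) hj
    have h2 : qpt lam c j ≤ qA lam := hmbc j 13 hj (le_refl 13)
    exact clmp_id _ _ _ h1 h2
  have hιT : ∀ c, -0.001 < c → c < 0.001 → ∀ x, ι x = Tform lam c c (⇑ι) x := by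
    intro c hc1 hc2 x
    obtain ⟨m1, m2, m3, m4, m5, m6, m7, m8⟩ := qids hpos hroot hgt c
    have hsbc := chain_mono_lt (qchain hpos hroot hc1 hc2)
    have pAC1 : -qA lam < qC1 lam c := hsbc 0 5 (by norm_num) (by norm_num)
    have pC1C2 : qC1 lam c < qC2 lam c := hsbc 5 8 (by norm_num) (by norm_num)
    have pC2A : qC2 lam c < qA lam := hsbc 8 13 (by norm_num) (by norm_num)
    have pAY1 : -qA lam < qY1 c := hsbc 0 1 (by norm_num) (by norm_num)
    have pX1A : qX1 c < qA lam := hsbc 12 13 (by norm_num) (by norm_num)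
    rw [hιapp]
    unfold Tform
    split_ifs with h1 h2
    · have himg_le : lam*x+1 ≤ qA lam := by
        nlinarith [mul_le_mul_of_nonneg_left h1 hpos.le, m1, pX1A]
      rcases le_or_gt (-qA lam) x with hx | hx
      · have h3 : -qA lam ≤ lam*x+1 := by
          nlinarith [mul_le_mul_of_nonneg_left hx hpos.le, m7]
        rw [hιapp (lam*x+1), clmp_id _ _ _ h3 himg_le, clmp_id _ _ _ hx (by linarith)]
        rw [eq_div_iff hne]; ring
      · have h3 : lam*x+1 ≤ -qA lam := by
          nlinarith [mul_le_mul_of_nonneg_left hx.le hpos.le, m7]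
        rw [hιapp (lam*x+1), clmp_of_le _ _ _ h3 (by linarith),
          clmp_of_le _ _ _ hx.le (by linarith)]
        rw [eq_div_iff hne]; linear_combination m7
    · have hx1 : qC1 lam c < x := not_le.1 h1
      have hy1 : -qA lam ≤ -(lam*x)+c := by
        nlinarith [mul_le_mul_of_nonneg_left h2 hpos.le, m3, pAY1]
      have hy2 : -(lam*x)+c ≤ qA lam := by
        nlinarith [mul_le_mul_of_nonneg_left hx1.le hpos.le, m2, pX1A]
      rw [hιapp (-(lam*x)+c), clmp_id _ _ _ hy1 hy2,
        clmp_id _ _ _ (by linarith) (by linarith)]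
      rw [eq_div_iff hne]; ring
    · have hx2 : qC2 lam c < x := not_le.1 h2
      have h3 : -qA lam ≤ lam*x-1 := by
        nlinarith [mul_le_mul_of_nonneg_left hx2.le hpos.le, m4, pAY1]
      rcases le_or_gt x (qA lam) with hxA | hxA
      · have h4 : lam*x-1 ≤ qA lam := by
          nlinarith [mul_le_mul_of_nonneg_left hxA hpos.le, m8]
        rw [hιapp (lam*x-1), clmp_id _ _ _ h3 h4,
          clmp_id _ _ _ (by linarith) hxA]
        rw [eq_div_iff hne]; ring
      · have h4 : qA lam ≤ lam*x-1 := by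
          nlinarith [mul_le_mul_of_nonneg_left hxA.le hpos.le, m8]
        rw [hιapp (lam*x-1), clmp_of_ge _ _ _ h4 (by linarith),
          clmp_of_ge _ _ _ hxA.le (by linarith)]
        rw [eq_div_iff hne]; linear_combination m8
  -- compositions are fixed points of the diagonal operators
  have hFC1 : F (qC1 lam b) = qC1 lam b' := hFS.2 5 (by norm_num)
  have hFC2 : F (qC2 lam b) = qC2 lam b' := hFS.2 8 (by norm_num)
  have hGC1 : G (qC1 lam b') = qC1 lam b := hGS.2 5 (by norm_num)
  have hGC2 : G (qC2 lam b') = qC2 lam b := hGS.2 8 (by norm_num)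
  have hGFapp : ∀ x, (G.compContinuous F.toContinuousMap) x = G (F x) := fun _ => rfl
  have hFGapp : ∀ x, (F.compContinuous G.toContinuousMap) x = F (G x) := fun _ => rfl
  have hGFS : Scond lam b b ⇑(G.compContinuous F.toContinuousMap) := by
    refine ⟨fun x y hxy => hGS.1 (hFS.1 hxy), ?_⟩
    intro j hj
    rw [hGFapp, hFS.2 j hj, hGS.2 j hj]
  have hFGS : Scond lam b' b' ⇑(F.compContinuous G.toContinuousMap) := by
    refine ⟨fun x y hxy => hFS.1 (hGS.1 hxy), ?_⟩
    intro j hj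
    rw [hFGapp, hGS.2 j hj, hFS.2 j hj]
  have hGFT : ∀ x, (G.compContinuous F.toContinuousMap) x
      = Tform lam b b (⇑(G.compContinuous F.toContinuousMap)) x := by
    intro x
    rw [hGFapp]
    unfold Tform
    split_ifs with h1 h2
    · rw [hGFapp (lam*x+1), EL x h1]
      have hFx : F x ≤ qC1 lam b' := by rw [← hFC1]; exact hFS.1 h1
      rw [EL' (F x) hFx, eq_div_iff hne]
      ring
    · have h1' := not_le.1 h1
      rw [hGFapp (-(lam*x)+b), EM x h1'.le h2]
      have hlo : qC1 lam b' ≤ F x := by rw [← hFC1]; exact hFS.1 h1'.le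
      have hhi : F x ≤ qC2 lam b' := by rw [← hFC2]; exact hFS.1 h2
      rw [show b' - lam * F x = -(lam * F x) + b' by ring, EM' (F x) hlo hhi,
        eq_div_iff hne]
      ring
    · have h2' := not_le.1 h2
      rw [hGFapp (lam*x-1), ER x h2'.le]
      have hge : qC2 lam b' ≤ F x := by rw [← hFC2]; exact hFS.1 h2'.le
      rw [ER' (F x) hge, eq_div_iff hne]
      ring
  have hFGT : ∀ x, (F.compContinuous G.toContinuousMap) x
      = Tform lam b' b' (⇑(F.compContinuous G.toContinuousMap)) x := by
    intro x
    rw [hFGapp]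
    unfold Tform
    split_ifs with h1 h2
    · rw [hFGapp (lam*x+1), EL' x h1]
      have hGx : G x ≤ qC1 lam b := by rw [← hGC1]; exact hGS.1 h1
      rw [EL (G x) hGx, eq_div_iff hne]
      ring
    · have h1' := not_le.1 h1
      rw [hFGapp (-(lam*x)+b'), EM' x h1'.le h2]
      have hlo : qC1 lam b ≤ G x := by rw [← hGC1]; exact hGS.1 h1'.le
      have hhi : G x ≤ qC2 lam b := by rw [← hGC2]; exact hGS.1 h2
      rw [show b - lam * G x = -(lam * G x) + b by ring, EM (G x) hlo hhi,
        eq_div_iff hne]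
      ring
    · have h2' := not_le.1 h2
      rw [hFGapp (lam*x-1), ER' x h2'.le]
      have hge : qC2 lam b ≤ G x := by rw [← hGC2]; exact hGS.1 h2'.le
      rw [ER (G x) hge, eq_div_iff hne]
      ring
  -- uniqueness of the diagonal fixed point identifies compositions with clamped identity
  have hGFeq : G.compContinuous F.toContinuousMap = IF1 := hIU1 _ hGFS hGFT
  have hιeq1 : ι = IF1 := hIU1 ι (hιS b hb1 hb2) (hιT b hb1 hb2)
  have hFGeq : F.compContinuous G.toContinuousMap = IF2 := hIU2 _ hFGS hFGT
  have hιeq2 : ι = IF2 := hIU2 ι (hιS b' hb1' hb2') (hιT b' hb1' hb2')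
  have hGF : ∀ x, G (F x) = ι x := by
    intro x
    rw [← hGFapp x, hGFeq, hιeq1]
  have hFG : ∀ x, F (G x) = ι x := by
    intro x
    rw [← hFGapp x, hFGeq, hιeq2]
  -- endpoints
  have hFlo : F (-qA lam) = -qA lam := hFS.2 0 (by norm_num)
  have hFhi : F (qA lam) = qA lam := hFS.2 13 (by norm_num)
  have hGlo : G (-qA lam) = -qA lam := hGS.2 0 (by norm_num)
  have hGhi : G (qA lam) = qA lam := hGS.2 13 (by norm_num)
  have hmapsF : Set.MapsTo ⇑F (Set.Icc (-qA lam) (qA lam)) (Set.Icc (-qA lam) (qA lam)) := by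
    rintro x ⟨hx1, hx2⟩
    constructor
    · have := hFS.1 hx1
      rwa [hFlo] at this
    · have := hFS.1 hx2
      rwa [hFhi] at this
  have hmapsG : Set.MapsTo ⇑G (Set.Icc (-qA lam) (qA lam)) (Set.Icc (-qA lam) (qA lam)) := by
    rintro x ⟨hx1, hx2⟩
    constructor
    · have := hGS.1 hx1
      rwa [hGlo] at this
    · have := hGS.1 hx2
      rwa [hGhi] at this
  show ∃ h : ℝ → ℝ,
      Set.BijOn h (Set.Icc (-qA lam) (qA lam)) (Set.Icc (-qA lam) (qA lam)) ∧
      ContinuousOn h (Set.Icc (-qA lam) (qA lam)) ∧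
      ∀ x ∈ Set.Icc (-qA lam) (qA lam), h (qmap lam b x) = qmap lam b' (h x)
  refine ⟨⇑F, ?_, ?_, ?_⟩
  · refine Set.InvOn.bijOn ⟨?_, ?_⟩ hmapsF hmapsG
    · rintro x ⟨hx1, hx2⟩
      rw [hGF x, hιapp, clmp_id _ _ _ hx1 hx2]
    · rintro x ⟨hx1, hx2⟩
      rw [hFG x, hιapp, clmp_id _ _ _ hx1 hx2]
  · exact F.continuous.continuousOn
  · intro x _
    exact qconj hpos hroot hb1 hb2 hb1' hb2' hFS hFT x
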